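/- Define ψ_E(λ) := −log(1 − λ) − λ for λ ∈ [0, 1). Then for every λ ∈ [0, 1) and every real y ≥ −1, exp( λ·y − y²·ψ_E(λ) ) ≤ 1 + λ·y; equivalently, λ·y − y²·ψ_E(λ) ≤ log(1 + λ·y) whenever 1 + λ·y > 0, with the boundary case y = −1 holding with equality. -/

import Mathlib

open Real Set

lemma icc_deriv_le' {f f' : ℝ → ℝ} {a b : ℝ} (hab : a ≤ b)
    (hd : ∀ x ∈ Set.Icc a b, HasDerivAt f (f' x) x)
    (h0 : ∀ x ∈ Set.Ioo a b, 0 ≤ f' x) : f a ≤ f b := by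
  have hmono : MonotoneOn f (Set.Icc a b) := by
    apply monotoneOn_of_deriv_nonneg (convex_Icc a b)
    · exact fun x hx => (hd x hx).continuousAt.continuousWithinAt
    · intro x hx
      rw [interior_Icc] at hx
      exact (hd x (Set.mem_Icc_of_Ioo hx)).differentiableAt.differentiableWithinAt
    · intro x hx
      rw [interior_Icc] at hx
      rw [(hd x (Set.mem_Icc_of_Ioo hx)).deriv]
      exact h0 x hx
  exact hmono (Set.left_mem_Icc.2 hab) (Set.right_mem_Icc.2 hab) hab

lemma icc_deriv_ge' {f f' : ℝ → ℝ} {a b : ℝ} (hab : a ≤ b)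
    (hd : ∀ x ∈ Set.Icc a b, HasDerivAt f (f' x) x)
    (h0 : ∀ x ∈ Set.Ioo a b, f' x ≤ 0) : f b ≤ f a := by
  have := icc_deriv_le' (f := fun x => -f x) (f' := fun x => -f' x) hab
    (fun x hx => (hd x hx).neg) (fun x hx => neg_nonneg.2 (h0 x hx))
  have h2 : -f a ≤ -f b := this
  linarith

lemma psi_lower {lam : ℝ} (h0 : 0 ≤ lam) (h1 : lam < 1) :
    lam + lam ^ 2 / 2 ≤ -Real.log (1 - lam) := by
  have key := icc_deriv_le' (f := fun t => -Real.log (1 - t) - t - t ^ 2 / 2)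
    (f' := fun t => 1 / (1 - t) - 1 - t) h0
    (fun x hx => by
      have hx1 : (1 : ℝ) - x ≠ 0 := by
        have : x < 1 := lt_of_le_of_lt hx.2 h1
        intro h; linarith [h]
      have hlog : HasDerivAt (fun t : ℝ => Real.log (1 - t)) ((-1) / (1 - x)) x := by
        simpa using ((hasDerivAt_id x).const_sub 1).log hx1
      have : HasDerivAt (fun t : ℝ => -Real.log (1 - t) - t - t ^ 2 / 2)
          (-((-1) / (1 - x)) - 1 - 2 * x / 2) x := by
        exact ((hlog.neg.sub (hasDerivAt_id x)).sub
          (((hasDerivAt_pow 2 x)).div_const 2)).congr_deriv (by ring_nf)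
      convert this using 1
      field_simp)
    (fun x hx => by
      have hx0 : 0 < x := hx.1
      have hx1 : x < 1 := lt_trans hx.2 h1
      have h1x : 0 < 1 - x := by linarith
      show (0:ℝ) ≤ 1 / (1 - x) - 1 - x
      have h : 1 + x ≤ 1 / (1 - x) := by rw [le_div_iff₀ h1x]; nlinarith
      linarith)
  simp only [sub_zero, Real.log_one] at key
  nlinarith [key]

lemma F_nonneg {lam : ℝ} (hl0 : 0 < lam) (hl1 : lam < 1) {u : ℝ} (hu : -lam ≤ u) :
    lam ^ 2 * (u - Real.log (1 + u)) ≤ u ^ 2 * (-Real.log (1 - lam) - lam) := by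
  set psi := -Real.log (1 - lam) - lam with hpsi
  have hpsi2 : lam ^ 2 ≤ 2 * psi := by
    have := psi_lower hl0.le hl1
    simp only [hpsi]; nlinarith
  have hpsipos : 0 < psi := by nlinarith
  set F : ℝ → ℝ := fun u => u ^ 2 * psi - lam ^ 2 * (u - Real.log (1 + u)) with hF
  have hFd : ∀ x : ℝ, -1 < x →
      HasDerivAt F (2 * x * psi - lam ^ 2 * (1 - 1 / (1 + x))) x := by
    intro x hx
    have hx1 : (1 : ℝ) + x ≠ 0 := by intro h; linarith [h]
    have hlog : HasDerivAt (fun t : ℝ => Real.log (1 + t)) (1 / (1 + x)) x := by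
      simpa using ((hasDerivAt_id x).const_add 1).log hx1
    have h1 : HasDerivAt (fun t : ℝ => t ^ 2 * psi) (2 * x * psi) x := by
      simpa [mul_comm] using (hasDerivAt_pow 2 x).mul_const psi
    have h2 : HasDerivAt (fun t : ℝ => t - Real.log (1 + t)) (1 - 1 / (1 + x)) x :=
      (hasDerivAt_id x).sub hlog
    exact h1.sub (h2.const_mul (lam ^ 2))
  have hF0 : F 0 = 0 := by simp [hF]
  have hFneg : F (-lam) = 0 := by
    simp only [hF, hpsi]
    have : (1 : ℝ) + -lam = 1 - lam := by ring
    rw [this]; ring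
  -- goal is 0 ≤ F u
  suffices h : 0 ≤ F u by simp only [hF] at h; linarith
  rcases le_or_gt 0 u with hu0 | hu0
  · -- monotone on [0, u]
    have := icc_deriv_le' (f := F) (f' := fun x => 2 * x * psi - lam ^ 2 * (1 - 1 / (1 + x)))
      hu0 (fun x hx => hFd x (by linarith [hx.1]))
      (fun x hx => by
        have hx0 : 0 < x := hx.1
        have h1x : 0 < 1 + x := by linarith
        show (0:ℝ) ≤ 2 * x * psi - lam ^ 2 * (1 - 1 / (1 + x))
        have heq : lam ^ 2 * (1 - 1 / (1 + x)) = lam ^ 2 * x / (1 + x) := by field_simp; ring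
        rw [heq, sub_nonneg, div_le_iff₀ h1x]
        nlinarith [mul_le_mul_of_nonneg_left hpsi2 hx0.le,
          mul_nonneg (mul_nonneg hx0.le hpsipos.le) hx0.le])
    linarith [hF0, this]
  · -- u ∈ [-lam, 0)
    rcases le_or_gt (2 * psi * (1 + u)) (lam ^ 2) with hcase | hcase
    · -- F' ≥ 0 on (-lam, u), so F u ≥ F (-lam) = 0
      have := icc_deriv_le' (f := F) (f' := fun x => 2 * x * psi - lam ^ 2 * (1 - 1 / (1 + x)))
        hu (fun x hx => hFd x (by have := hx.1; linarith))
        (fun x hx => by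
          have hxl : -lam < x := hx.1
          have hxu : x < u := hx.2
          have h1x : 0 < 1 + x := by linarith
          have hkey : 2 * psi * (1 + x) ≤ lam ^ 2 := by nlinarith [hcase]
          show (0:ℝ) ≤ 2 * x * psi - lam ^ 2 * (1 - 1 / (1 + x))
          have heq : lam ^ 2 * (1 - 1 / (1 + x)) = lam ^ 2 * x / (1 + x) := by field_simp; ring
          rw [heq, sub_nonneg]
          rw [div_le_iff₀ h1x]
          nlinarith)
      linarith [hFneg, this]
    · -- F' ≤ 0 on (u, 0), so F u ≥ F 0 = 0
      have := icc_deriv_ge' (f := F) (f' := fun x => 2 * x * psi - lam ^ 2 * (1 - 1 / (1 + x)))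
        hu0.le (fun x hx => hFd x (by have := hx.1; linarith))
        (fun x hx => by
          have hxl : u < x := hx.1
          have hxu : x < 0 := hx.2
          have h1x : 0 < 1 + x := by linarith
          have hkey : lam ^ 2 ≤ 2 * psi * (1 + x) := by nlinarith [hcase]
          show 2 * x * psi - lam ^ 2 * (1 - 1 / (1 + x)) ≤ (0:ℝ)
          have heq : lam ^ 2 * (1 - 1 / (1 + x)) = lam ^ 2 * x / (1 + x) := by field_simp; ring
          rw [heq, sub_nonpos, le_div_iff₀ h1x]
          nlinarith)
      linarith [hF0, this]

/-- The scalar exponential inequality underlying the empirical-Bernstein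
test supermartingale, with `ψ_E(λ) = -log(1-λ) - λ`. -/
theorem exp_le_one_add_of_empirical_bernstein
    (lam : ℝ) (hlam : lam ∈ Set.Ico (0 : ℝ) 1) (y : ℝ) (hy : -1 ≤ y) :
    Real.exp (lam * y - y ^ 2 * (-Real.log (1 - lam) - lam)) ≤ 1 + lam * y ∧
      (0 < 1 + lam * y →
        lam * y - y ^ 2 * (-Real.log (1 - lam) - lam) ≤ Real.log (1 + lam * y)) ∧
      Real.exp (lam * (-1 : ℝ) - (-1 : ℝ) ^ 2 * (-Real.log (1 - lam) - lam))
        = 1 + lam * (-1 : ℝ) := by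
  obtain ⟨hl0, hl1⟩ := hlam
  have h1lam : 0 < 1 - lam := by linarith
  have hpos : 0 < 1 + lam * y := by nlinarith
  have hlog : lam * y - y ^ 2 * (-Real.log (1 - lam) - lam) ≤ Real.log (1 + lam * y) := by
    rcases eq_or_lt_of_le hl0 with h | h
    · simp [← h]
    · have key := F_nonneg h hl1 (u := lam * y) (by nlinarith)
      have hlog2 : lam ^ 2 * (lam * y - Real.log (1 + lam * y)) ≤
          (lam * y) ^ 2 * (-Real.log (1 - lam) - lam) := key
      have hl2 : 0 < lam ^ 2 := by positivity
      nlinarith [hlog2]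
  refine ⟨?_, fun _ => hlog, ?_⟩
  · calc Real.exp (lam * y - y ^ 2 * (-Real.log (1 - lam) - lam))
        ≤ Real.exp (Real.log (1 + lam * y)) := Real.exp_le_exp.2 hlog
      _ = 1 + lam * y := Real.exp_log hpos
  · have : lam * (-1 : ℝ) - (-1 : ℝ) ^ 2 * (-Real.log (1 - lam) - lam)
        = Real.log (1 - lam) := by ring
    rw [this, Real.exp_log h1lam]; ring
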